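/- For every n ≥ 3 with n ≠ 4, the unidirectional oriented cycle C⃗_n is {0,2}-antimagic. -/
import Mathlib


open scoped Classical

/-- There is a directed walk of length `k` from `u` to `v` in the digraph with arc relation `A`. -/
def WalkLen {V : Type*} (A : V → V → Prop) : ℕ → V → V → Prop
  | 0, u, v => u = v
  | k + 1, u, v => ∃ w, A u w ∧ WalkLen A k w v

/-- The directed distance from `u` to `v` is exactly `k`
(i.e. `k` is the length of a shortest directed path from `u` to `v`). -/
def HasDist {V : Type*} (A : V → V → Prop) (u v : V) (k : ℕ) : Prop :=
  WalkLen A k u v ∧ ∀ m < k, ¬ WalkLen A m u v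

/-- `y` belongs to the `D`-neighborhood of `v`: the distance from `v` to `y` lies in `D`. -/
def InDNbhd {V : Type*} (A : V → V → Prop) (D : Set ℕ) (v y : V) : Prop :=
  ∃ k ∈ D, HasDist A v y k

/-- The `D`-weight of `v` under the labeling `f`: the sum of labels of the `D`-neighbors. -/
noncomputable def dWeight {V : Type*} [Fintype V] (A : V → V → Prop) (D : Set ℕ)
    (f : V → ℕ) (v : V) : ℕ :=
  ∑ y : V, if InDNbhd A D v y then f y else 0

/-- The digraph `(V, A)` is `D`-antimagic: some bijective labeling of the vertices by
`1, …, |V|` gives pairwise distinct `D`-weights. -/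
def DAntimagic (V : Type*) [Fintype V] (A : V → V → Prop) (D : Set ℕ) : Prop :=
  ∃ f : V ≃ Fin (Fintype.card V),
    Function.Injective fun v => dWeight A D (fun y => (f y : ℕ) + 1) v

/-- The orientation of the cycle `C_n` determined by `σ`: the edge between vertex `i` and
vertex `(i+1) mod n` is directed `i → i+1` when `σ i = true`, and `i+1 → i` otherwise. -/
def cycleArc (n : ℕ) (σ : Fin n → Bool) (u v : Fin n) : Prop :=
  (σ u = true ∧ (v : ℕ) = ((u : ℕ) + 1) % n) ∨
  (σ v = false ∧ (u : ℕ) = ((v : ℕ) + 1) % n)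

/-- The arc relation of the unidirectional oriented cycle `C⃗_n`: arcs `i → (i+1) mod n`. -/
def uniArc (n : ℕ) (u v : Fin n) : Prop :=
  (v : ℕ) = ((u : ℕ) + 1) % n

/-- An orientation of `C_n` is unidirectional if all edges are directed the same way around. -/
def Unidirectional (n : ℕ) (σ : Fin n → Bool) : Prop :=
  (∀ i, σ i = true) ∨ (∀ i, σ i = false)

/-- A sink: a vertex of out-degree 0. -/
def IsSink {V : Type*} (A : V → V → Prop) (u : V) : Prop :=
  ∀ v, ¬ A u v

/-- A source: a vertex of in-degree 0. -/
def IsSource {V : Type*} (A : V → V → Prop) (u : V) : Prop :=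
  ∀ v, ¬ A v u

/-- A digraph is Θ-oriented if it has exactly one sink and exactly one source, and
they are adjacent (so the arc between them goes from the source to the sink). -/
def ThetaOriented {V : Type*} (A : V → V → Prop) : Prop :=
  ∃ s t, IsSink A s ∧ IsSource A t ∧ (∀ u, IsSink A u → u = s) ∧
    (∀ u, IsSource A u → u = t) ∧ A t s

/-- The arc relation of the Θ-oriented cycle on `Fin n`:
arcs `i → i+1` for `0 ≤ i ≤ n-2`, together with the arc `0 → n-1`. -/
def thetaArc (n : ℕ) (u v : Fin n) : Prop :=
  ((v : ℕ) = (u : ℕ) + 1) ∨ ((u : ℕ) = 0 ∧ (v : ℕ) = n - 1)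

/-- The arc relation of a disjoint union of `c` oriented cycles, the `j`-th component having
`len j` vertices and arc relation `A j`. -/
def unionArc (c : ℕ) (len : Fin c → ℕ)
    (A : ∀ j, Fin (len j) → Fin (len j) → Prop)
    (u v : Σ j, Fin (len j)) : Prop :=
  ∃ h : u.1 = v.1, A v.1 (Fin.cast (congrArg len h) u.2) v.2

-- auxiliary lemmas
lemma mod_two_cases {n : ℕ} (hn : 0 < n) {a : ℕ} (ha : a < 2 * n) :
    (a % n = a ∧ a < n) ∨ (a % n = a - n ∧ n ≤ a) := by
  rcases lt_or_ge a n with h | h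
  · exact Or.inl ⟨Nat.mod_eq_of_lt h, h⟩
  · refine Or.inr ⟨?_, h⟩
    rw [Nat.mod_eq_sub_mod h, Nat.mod_eq_of_lt (by omega)]

lemma walkLen_uni {n : ℕ} (hn : 0 < n) :
    ∀ (k : ℕ) (u v : Fin n), WalkLen (uniArc n) k u v ↔ (v : ℕ) = ((u : ℕ) + k) % n := by
  intro k
  induction k with
  | zero =>
    intro u v
    simp only [WalkLen, Nat.add_zero, Nat.mod_eq_of_lt u.isLt, Fin.ext_iff]
    exact eq_comm
  | succ k ih =>
    intro u v
    constructor
    · rintro ⟨w, hw, hwk⟩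
      rw [ih] at hwk
      rw [uniArc] at hw
      rw [hwk, hw, Nat.mod_add_mod]
      congr 1
      omega
    · intro h
      refine ⟨⟨((u : ℕ) + 1) % n, Nat.mod_lt _ hn⟩, rfl, ?_⟩
      rw [ih]
      simp only [Nat.mod_add_mod]
      rw [h]
      congr 1
      omega

lemma hasDist_zero {n : ℕ} (u v : Fin n) : HasDist (uniArc n) u v 0 ↔ v = u := by
  constructor
  · rintro ⟨h, -⟩; exact (h : u = v).symm
  · rintro rfl; exact ⟨rfl, by omega⟩

lemma hasDist_two {n : ℕ} (hn : 3 ≤ n) (u v : Fin n) :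
    HasDist (uniArc n) u v 2 ↔ (v : ℕ) = ((u : ℕ) + 2) % n := by
  have hn0 : 0 < n := by omega
  constructor
  · rintro ⟨h, -⟩
    exact (walkLen_uni hn0 2 u v).mp h
  · intro h
    refine ⟨(walkLen_uni hn0 2 u v).mpr h, ?_⟩
    intro m hm hw
    rw [walkLen_uni hn0 m u v] at hw
    have hu := u.isLt
    have h2 := mod_two_cases hn0 (a := (u : ℕ) + 2) (by omega)
    interval_cases m
    · rw [hw] at h
      have h0 := mod_two_cases hn0 (a := (u : ℕ) + 0) (by omega)
      omega
    · rw [hw] at h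
      have h1 := mod_two_cases hn0 (a := (u : ℕ) + 1) (by omega)
      omega

lemma inDNbhd_uni {n : ℕ} (hn : 3 ≤ n) (v y : Fin n) :
    InDNbhd (uniArc n) {0, 2} v y ↔ (y = v ∨ (y : ℕ) = ((v : ℕ) + 2) % n) := by
  constructor
  · rintro ⟨k, hk, hd⟩
    rcases hk with rfl | hk
    · exact Or.inl ((hasDist_zero v y).mp hd)
    · rw [Set.mem_singleton_iff] at hk
      subst hk
      exact Or.inr ((hasDist_two hn v y).mp hd)
  · rintro (rfl | h)
    · exact ⟨0, Or.inl rfl, (hasDist_zero y y).mpr rfl⟩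
    · exact ⟨2, Or.inr rfl, (hasDist_two hn v y).mpr h⟩


lemma dWeight_uni {n : ℕ} (hn : 3 ≤ n) (f : Fin n → ℕ) (v : Fin n) :
    dWeight (uniArc n) {0, 2} f v
      = f v + f ⟨((v : ℕ) + 2) % n, Nat.mod_lt _ (by omega)⟩ := by
  set w : Fin n := ⟨((v : ℕ) + 2) % n, Nat.mod_lt _ (by omega)⟩ with hw
  have hwval : (w : ℕ) = ((v : ℕ) + 2) % n := by rw [hw]
  have hvw : v ≠ w := by
    have hv := v.isLt
    have h2 := mod_two_cases (show 0 < n by omega) (a := (v : ℕ) + 2) (by omega)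
    intro h
    have h3 : (v : ℕ) = (w : ℕ) := congrArg Fin.val h
    omega
  have key : ∀ y : Fin n,
      (if InDNbhd (uniArc n) {0, 2} v y then f y else 0)
        = (if y ∈ ({v, w} : Finset (Fin n)) then f y else 0) := by
    intro y
    have hiff : InDNbhd (uniArc n) {0, 2} v y ↔ y ∈ ({v, w} : Finset (Fin n)) := by
      rw [inDNbhd_uni hn, Finset.mem_insert, Finset.mem_singleton,
        Fin.ext_iff (a := y) (b := w), hwval]
    simp only [hiff]
  rw [dWeight, Finset.sum_congr rfl fun y _ => key y, Finset.sum_ite_mem,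
    Finset.univ_inter, Finset.sum_pair hvw]

lemma build_antimagic {n : ℕ} (hn : 3 ≤ n) (L : Fin n → ℕ)
    (hlb : ∀ v, 1 ≤ L v) (hub : ∀ v, L v ≤ n)
    (hinj : Function.Injective L)
    (hW : ∀ v v' : Fin n,
      L v + L ⟨((v : ℕ) + 2) % n, Nat.mod_lt _ (by omega)⟩
        = L v' + L ⟨((v' : ℕ) + 2) % n, Nat.mod_lt _ (by omega)⟩ → v = v') :
    DAntimagic (Fin n) (uniArc n) {0, 2} := by
  have e0inj : Function.Injective (fun v : Fin n => (⟨L v - 1, by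
      have := hub v; have := hlb v; omega⟩ : Fin n)) := by
    intro v v' h
    apply hinj
    have h1 := hlb v; have h2 := hlb v'
    have := congrArg Fin.val h
    simp only at this
    omega
  let e : Fin n ≃ Fin n := Equiv.ofBijective _ (Finite.injective_iff_bijective.mp e0inj)
  refine ⟨e.trans (finCongr (Fintype.card_fin n).symm), ?_⟩
  have hlab : ∀ y : Fin n,
      ((e.trans (finCongr (Fintype.card_fin n).symm)) y : ℕ) + 1 = L y := by
    intro y
    have h1 := hlb y
    have : ((e.trans (finCongr (Fintype.card_fin n).symm)) y : ℕ) = (e y : ℕ) := by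
      simp [finCongr_apply]
    rw [this]
    show (L y - 1) + 1 = L y
    omega
  intro v v' h
  simp only [dWeight_uni hn, hlab] at h
  exact hW v v' h

-- odd case
lemma odd_case {n : ℕ} (hn : 3 ≤ n) (ho : n % 2 = 1) :
    DAntimagic (Fin n) (uniArc n) {0, 2} := by
  set c := (n + 1) / 2 with hcdef
  have hc : 2 * c = n + 1 := by omega
  have key : ∀ v v' : Fin n, (c * (v : ℕ)) % n = (c * (v' : ℕ)) % n → v = v' := by
    intro v v' h
    have h2 : (2 * (c * (v : ℕ))) % n = (2 * (c * (v' : ℕ))) % n := by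
      rw [Nat.mul_mod, h, ← Nat.mul_mod]
    have e1 : ∀ x : ℕ, 2 * (c * x) = x + x * n := by
      intro x
      rw [← Nat.mul_assoc, hc]
      ring
    rw [e1, e1, Nat.add_mul_mod_self_right, Nat.add_mul_mod_self_right,
      Nat.mod_eq_of_lt v.isLt, Nat.mod_eq_of_lt v'.isLt] at h2
    exact Fin.ext h2
  have step : ∀ v : Fin n, (c * (((v : ℕ) + 2) % n)) % n = ((c * (v : ℕ)) % n + 1) % n := by
    intro v
    have h1 : c * (((v : ℕ) + 2) % n) % n = c * ((v : ℕ) + 2) % n :=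
      Nat.ModEq.mul_left c (Nat.mod_modEq _ _)
    have h2 : c * ((v : ℕ) + 2) = (c * (v : ℕ) + 1) + n := by
      rw [Nat.mul_add]; omega
    have h3 : (c * (v : ℕ) + 1) % n = ((c * (v : ℕ)) % n + 1) % n :=
      Nat.ModEq.add_right 1 (Nat.mod_modEq _ _).symm
    rw [h1, h2, Nat.add_mod_right, h3]
  apply build_antimagic hn (fun v => (c * (v : ℕ)) % n + 1)
  · intro v; omega
  · intro v; have := Nat.mod_lt (c * (v : ℕ)) (show 0 < n by omega); omega
  · intro v v' h
    simp only at h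
    exact key v v' (by omega)
  · intro v v' h
    simp only [step] at h
    set j := (c * (v : ℕ)) % n with hj
    set j' := (c * (v' : ℕ)) % n with hj'
    have hjlt : j < n := Nat.mod_lt _ (by omega)
    have hjlt' : j' < n := Nat.mod_lt _ (by omega)
    have m1 := mod_two_cases (show 0 < n by omega) (a := j + 1) (by omega)
    have m2 := mod_two_cases (show 0 < n by omega) (a := j' + 1) (by omega)
    have : j = j' := by omega
    exact key v v' this

def baseLab (m q : ℕ) : ℕ :=
  if m % 2 = 1 then q + 1 else if q = 0 then 2 else if q = 1 then 1 else q + 1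

lemma baseLab_lb (m q : ℕ) : 1 ≤ baseLab m q := by
  unfold baseLab; split_ifs <;> omega

lemma baseLab_ub {m q : ℕ} (hm : 3 ≤ m) (h : q < m) : baseLab m q ≤ m := by
  unfold baseLab; split_ifs <;> omega

lemma baseLab_inj {m q q' : ℕ} (hq : q < m) (hq' : q' < m)
    (h : baseLab m q = baseLab m q') : q = q' := by
  unfold baseLab at h; split_ifs at h <;> omega

lemma succ_mod_eq {m q : ℕ} (hq : q < m) : (q + 1) % m = if q + 1 = m then 0 else q + 1 := by
  split_ifs with hh
  · rw [hh, Nat.mod_self]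
  · exact Nat.mod_eq_of_lt (by omega)

lemma baseSum_inj {m q q' : ℕ} (hm : 3 ≤ m) (hq : q < m) (hq' : q' < m)
    (h : baseLab m q + baseLab m ((q + 1) % m) = baseLab m q' + baseLab m ((q' + 1) % m)) :
    q = q' := by
  rw [succ_mod_eq hq, succ_mod_eq hq'] at h
  unfold baseLab at h
  split_ifs at h <;> omega

lemma even_case {n : ℕ} (hn : 3 ≤ n) (hne : n ≠ 4) (he : n % 2 = 0) :
    DAntimagic (Fin n) (uniArc n) {0, 2} := by
  set m := n / 2 with hmdef
  have hm : n = 2 * m := by omega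
  have hm3 : 3 ≤ m := by omega
  have hstep : ∀ v : Fin n,
      (((v : ℕ) + 2) % n) / 2 = ((v : ℕ) / 2 + 1) % m ∧
        (((v : ℕ) + 2) % n) % 2 = (v : ℕ) % 2 := by
    intro v
    have hv := v.isLt
    have h2 := mod_two_cases (show 0 < n by omega) (a := (v : ℕ) + 2) (by omega)
    have h3 := mod_two_cases (show 0 < m by omega) (a := (v : ℕ) / 2 + 1) (by omega)
    omega
  apply build_antimagic hn
    (fun v => baseLab m ((v : ℕ) / 2) + (if (v : ℕ) % 2 = 0 then 0 else m))
  · intro v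
    have := baseLab_lb m ((v : ℕ) / 2)
    split_ifs <;> omega
  · intro v
    have hv := v.isLt
    have := baseLab_ub hm3 (show (v : ℕ) / 2 < m by omega)
    split_ifs <;> omega
  · intro v v' h
    simp only at h
    have hv := v.isLt
    have hv' := v'.isLt
    have b1 := baseLab_lb m ((v : ℕ) / 2)
    have b2 := baseLab_lb m ((v' : ℕ) / 2)
    have b3 := baseLab_ub hm3 (show (v : ℕ) / 2 < m by omega)
    have b4 := baseLab_ub hm3 (show (v' : ℕ) / 2 < m by omega)
    have hr : (v : ℕ) % 2 = (v' : ℕ) % 2 := by split_ifs at h <;> omega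
    have hB : baseLab m ((v : ℕ) / 2) = baseLab m ((v' : ℕ) / 2) := by
      split_ifs at h <;> omega
    have hq : (v : ℕ) / 2 = (v' : ℕ) / 2 := baseLab_inj (by omega) (by omega) hB
    exact Fin.ext (by omega)
  · intro v v' h
    simp only at h
    have hv := v.isLt
    have hv' := v'.isLt
    obtain ⟨hq1, hr1⟩ := hstep v
    obtain ⟨hq2, hr2⟩ := hstep v'
    rw [hq1, hr1, hq2, hr2] at h
    have b1 := baseLab_lb m ((v : ℕ) / 2)
    have b2 := baseLab_lb m ((v' : ℕ) / 2)
    have b3 := baseLab_ub hm3 (show (v : ℕ) / 2 < m by omega)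
    have b4 := baseLab_ub hm3 (show (v' : ℕ) / 2 < m by omega)
    have b5 := baseLab_lb m (((v : ℕ) / 2 + 1) % m)
    have b6 := baseLab_lb m (((v' : ℕ) / 2 + 1) % m)
    have b7 := baseLab_ub hm3 (Nat.mod_lt ((v : ℕ) / 2 + 1) (show 0 < m by omega))
    have b8 := baseLab_ub hm3 (Nat.mod_lt ((v' : ℕ) / 2 + 1) (show 0 < m by omega))
    have hr : (v : ℕ) % 2 = (v' : ℕ) % 2 := by split_ifs at h <;> omega
    have hB : baseLab m ((v : ℕ) / 2) + baseLab m (((v : ℕ) / 2 + 1) % m)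
        = baseLab m ((v' : ℕ) / 2) + baseLab m (((v' : ℕ) / 2 + 1) % m) := by
      split_ifs at h <;> omega
    have hq : (v : ℕ) / 2 = (v' : ℕ) / 2 :=
      baseSum_inj hm3 (by omega) (by omega) hB
    exact Fin.ext (by omega)


/-- For every `n ≥ 3` with `n ≠ 4`, the unidirectional `C⃗_n` is
`{0,2}`-antimagic. -/
theorem uni_antimagic_zero_two (n : ℕ) (hn : 3 ≤ n) (hne : n ≠ 4) :
    DAntimagic (Fin n) (uniArc n) {0, 2} := by
  rcases Nat.even_or_odd n with he | ho
  · exact even_case hn hne (Nat.even_iff.mp he)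
  · exact odd_case hn (Nat.odd_iff.mp ho)
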